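/- For any ρ > 0, (ρ² e^ρ)/(ρ e^ρ − e^ρ + 1) ≤ 2 + 2ρ. -/

import Mathlib

open Real

lemma aux1 (x : ℝ) (hx : 0 ≤ x) :
    0 ≤ Real.exp x * (x^2 + 2*x - 2) + 2 := by
  set f : ℝ → ℝ := fun x => Real.exp x * (x^2 + 2*x - 2) + 2 with hf
  have hd : ∀ y : ℝ, HasDerivAt f (Real.exp y * (y^2 + 4*y)) y := by
    intro y
    have h1 : HasDerivAt (fun y : ℝ => y^2 + 2*y - 2) (2*y + 2) y := by
      have := ((hasDerivAt_pow 2 y).add ((hasDerivAt_id y).const_mul 2)).sub_const 2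
      exact this.congr_deriv (by ring)
    have := ((Real.hasDerivAt_exp y).mul h1).add_const 2
    exact this.congr_deriv (by ring)
  have hmono : MonotoneOn f (Set.Ici (0:ℝ)) := by
    apply monotoneOn_of_deriv_nonneg (convex_Ici 0)
    · exact (Continuous.continuousOn (by continuity))
    · intro y hy
      exact (hd y).differentiableAt.differentiableWithinAt
    · intro y hy
      rw [(hd y).deriv]
      rw [interior_Ici] at hy
      have := Real.exp_pos y
      nlinarith [hy.out]
  have h0 : f 0 = 0 := by simp [hf]
  have := hmono (Set.self_mem_Ici) hx hx
  rw [h0] at this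
  exact this

lemma aux2 (x : ℝ) (hx : 0 ≤ x) :
    0 ≤ Real.exp x * (x^2 - 2) + 2 + 2*x := by
  set f : ℝ → ℝ := fun x => Real.exp x * (x^2 - 2) + 2 + 2*x with hf
  have hd : ∀ y : ℝ, HasDerivAt f (Real.exp y * (y^2 + 2*y - 2) + 2) y := by
    intro y
    have h1 : HasDerivAt (fun y : ℝ => y^2 - 2) (2*y) y := by
      have := (hasDerivAt_pow 2 y).sub_const 2
      exact this.congr_deriv (by ring)
    have := (((Real.hasDerivAt_exp y).mul h1).add_const 2).add
      ((hasDerivAt_id y).const_mul 2)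
    exact this.congr_deriv (by ring)
  have hmono : MonotoneOn f (Set.Ici (0:ℝ)) := by
    apply monotoneOn_of_deriv_nonneg (convex_Ici 0)
    · exact (Continuous.continuousOn (by continuity))
    · intro y hy
      exact (hd y).differentiableAt.differentiableWithinAt
    · intro y hy
      rw [(hd y).deriv]
      rw [interior_Ici] at hy
      exact aux1 y hy.out.le
  have h0 : f 0 = 0 := by simp [hf]
  have := hmono (Set.self_mem_Ici) hx hx
  rw [h0] at this
  exact this

/-- For any `ρ > 0`, `(ρ² e^ρ)/(ρ e^ρ − e^ρ + 1) ≤ 2 + 2ρ`. -/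
theorem stmt_2 (ρ : ℝ) (hρ : 0 < ρ) :
    ρ^2 * Real.exp ρ / (ρ * Real.exp ρ - Real.exp ρ + 1) ≤ 2 + 2 * ρ := by
  have hlt : 1 - ρ < Real.exp (-ρ) := by
    have := Real.add_one_lt_exp (x := -ρ) (by linarith)
    linarith
  have hden : 0 < ρ * Real.exp ρ - Real.exp ρ + 1 := by
    have hpos := Real.exp_pos ρ
    have h2 : (1 - ρ) * Real.exp ρ < 1 := by
      have := mul_lt_mul_of_pos_right hlt hpos
      rwa [← Real.exp_add, neg_add_cancel, Real.exp_zero] at this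
    nlinarith
  rw [div_le_iff₀ hden]
  nlinarith [aux2 ρ hρ.le, Real.exp_pos ρ]
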